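/- The map sending t ↦ (β+1)/(β−1) extends to a field isomorphism F(t) → L = F(t)(β), where β² = 1 + t^{−1}; in particular (β+1)/(β−1) is transcendental over F and generates L over F. Moreover this isomorphism maps F[t, t^{−1}] onto F[(β+1)/(β−1), (β−1)/(β+1)] = F[t, tβ]. -/
import Mathlib

theorem ratfunc_iso_quadratic (F : Type*) [Field F] [Fintype F]
    (hodd : Odd (ringChar F))
    (L : Type*) [Field L] [Algebra F L] [Algebra (RatFunc F) L]
    [IsScalarTower F (RatFunc F) L]
    (β : L) (hβ : β ^ 2 = algebraMap (RatFunc F) L (1 + RatFunc.X⁻¹))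
    (hgen : ∀ z : L, ∃ j k : RatFunc F,
      z = algebraMap (RatFunc F) L j + algebraMap (RatFunc F) L k * β) :
    Transcendental F ((β + 1) / (β - 1)) ∧
    ∃ σ : RatFunc F ≃ₐ[F] L,
      σ RatFunc.X = (β + 1) / (β - 1) ∧
      (Algebra.adjoin F {RatFunc.X, RatFunc.X⁻¹}).map σ.toAlgHom =
        Algebra.adjoin F {algebraMap (RatFunc F) L RatFunc.X,
          algebraMap (RatFunc F) L RatFunc.X * β} := by
  classical
  have hinj : Function.Injective (algebraMap (RatFunc F) L) :=
    (algebraMap (RatFunc F) L).injective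
  set t : L := algebraMap (RatFunc F) L RatFunc.X with ht
  have ht0 : t ≠ 0 := by
    rw [ht, Ne, map_eq_zero_iff _ hinj]
    exact RatFunc.X_ne_zero
  have hβ' : β ^ 2 = 1 + t⁻¹ := by rw [hβ, map_add, map_one, map_inv₀]
  -- characteristic facts
  have h2F : (2 : F) ≠ 0 := by
    intro h
    have hd : ringChar F ∣ 2 := by
      have := (CharP.cast_eq_zero_iff F (ringChar F) 2).mp (by exact_mod_cast h)
      exact this
    rcases (Nat.dvd_prime Nat.prime_two).mp hd with h1 | h2
    · have : (1 : F) = 0 := by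
        have := CharP.cast_eq_zero F (ringChar F)
        rw [h1] at this
        exact_mod_cast this
      exact one_ne_zero this
    · rw [h2] at hodd
      exact (Nat.not_odd_iff_even.mpr even_two) hodd
  have h4F : (4 : F) ≠ 0 := by
    have : (4 : F) = 2 * 2 := by norm_num
    rw [this]; exact mul_ne_zero h2F h2F
  have hFL : Function.Injective (algebraMap F L) := (algebraMap F L).injective
  have h2L : (2 : L) ≠ 0 := by
    rw [show (2 : L) = algebraMap F L 2 from (map_ofNat _ 2).symm, Ne,
      map_eq_zero_iff _ hFL]
    exact h2F
  have h4L : (4 : L) ≠ 0 := by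
    rw [show (4 : L) = algebraMap F L 4 from (map_ofNat _ 4).symm, Ne,
      map_eq_zero_iff _ hFL]
    exact h4F
  have hb1 : β - 1 ≠ 0 := by
    intro h
    rw [sub_eq_zero] at h
    rw [h] at hβ'
    apply ht0
    rw [← inv_eq_zero]
    linear_combination -hβ'
  have hb1' : β + 1 ≠ 0 := by
    intro h
    have h' : β = -1 := by linear_combination h
    rw [h'] at hβ'
    apply ht0
    rw [← inv_eq_zero]
    linear_combination -hβ'
  set γ : L := (β + 1) / (β - 1) with hγdef
  have hβ2' : t * β ^ 2 = t + 1 := by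
    rw [hβ']
    field_simp
  have hγ : γ = 1 + 2 * t + 2 * (t * β) := by
    rw [hγdef, div_eq_iff hb1]
    linear_combination (-2 : L) * hβ2'
  have hγinv : γ⁻¹ = 1 + 2 * t - 2 * (t * β) := by
    rw [hγdef, inv_div, div_eq_iff hb1']
    linear_combination (2 : L) * hβ2'
  have hγ0 : γ ≠ 0 := div_ne_zero hb1' hb1
  have hγ1 : γ - 1 ≠ 0 := by
    rw [sub_ne_zero]
    intro h
    rw [hγdef, div_eq_one_iff_eq hb1] at h
    exact h2L (by linear_combination h)
  have hident : t = algebraMap F L 4⁻¹ * (γ + γ⁻¹ - algebraMap F L 2) := by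
    rw [map_inv₀, map_ofNat, map_ofNat, hγinv, hγ]
    field_simp
    ring
  have hident2 : t * β = algebraMap F L 4⁻¹ * (γ - γ⁻¹) := by
    rw [map_inv₀, map_ofNat, hγinv, hγ]
    field_simp
    ring
  -- transcendence
  have htrX : Transcendental F (RatFunc.X : RatFunc F) := by
    rw [← RatFunc.algebraMap_X]
    exact (transcendental_algebraMap_iff
      (IsFractionRing.injective (Polynomial F) (RatFunc F))).mpr
      (Polynomial.transcendental_X F)
  have htrt : Transcendental F t := (transcendental_algebraMap_iff hinj).mpr htrX
  have htrγ : Transcendental F γ := by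
    intro halg
    apply htrt
    rw [hident]
    exact ((isAlgebraic_algebraMap _).isIntegral.mul
      (((halg.isIntegral.add halg.inv.isIntegral).sub
        (isAlgebraic_algebraMap _).isIntegral))).isAlgebraic
  -- build the map
  have hφinj : Function.Injective (Polynomial.aeval γ : Polynomial F →ₐ[F] L) :=
    transcendental_iff_injective.mp htrγ
  set ψ : RatFunc F →ₐ[F] L :=
    RatFunc.liftAlgHom (Polynomial.aeval γ)
      (nonZeroDivisors_le_comap_nonZeroDivisors_of_injective _ hφinj) with hψdef
  have hψX : ψ RatFunc.X = γ := by
    have := RatFunc.liftAlgHom_apply_div (φ := (Polynomial.aeval γ : Polynomial F →ₐ[F] L))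
      (hφ := nonZeroDivisors_le_comap_nonZeroDivisors_of_injective _ hφinj)
      Polynomial.X 1
    simpa [RatFunc.algebraMap_X] using this
  have hinv_mem : ∀ x ∈ ψ.range, x⁻¹ ∈ ψ.range := by
    rintro x ⟨y, rfl⟩
    exact ⟨y⁻¹, map_inv₀ ψ y⟩
  have hγ_mem : γ ∈ ψ.range := ⟨RatFunc.X, hψX⟩
  have hβ_mem : β ∈ ψ.range := by
    refine ⟨(RatFunc.X + 1) / (RatFunc.X - 1), ?_⟩
    have hψX2 : ψ.toRingHom RatFunc.X = γ := hψX
    rw [map_div₀, map_add, map_sub, map_one, hψX2, div_eq_iff hγ1, hγ]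
    linear_combination (-2 : L) * hβ2'
  have hconst_mem : ∀ a : F, algebraMap F L a ∈ ψ.range := fun a =>
    ⟨algebraMap F (RatFunc F) a, ψ.commutes a⟩
  have ht_mem : t ∈ ψ.range := by
    rw [hident]
    exact mul_mem (hconst_mem _)
      (sub_mem (add_mem hγ_mem (hinv_mem _ hγ_mem)) (hconst_mem _))
  have hA : ∀ p : Polynomial F,
      algebraMap (RatFunc F) L (algebraMap (Polynomial F) (RatFunc F) p) ∈ ψ.range := by
    intro p
    induction p using Polynomial.induction_on' with
    | add p q hp hq =>
      rw [map_add, map_add]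
      exact add_mem hp hq
    | monomial n a =>
      rw [← Polynomial.C_mul_X_pow_eq_monomial, map_mul, map_mul, map_pow, map_pow,
        RatFunc.algebraMap_X, ← ht]
      have hCa : algebraMap (RatFunc F) L (algebraMap (Polynomial F) (RatFunc F)
          (Polynomial.C a)) = algebraMap F L a := by
        rw [← Polynomial.algebraMap_eq,
          ← IsScalarTower.algebraMap_apply F (Polynomial F) (RatFunc F),
          ← IsScalarTower.algebraMap_apply F (RatFunc F) L]
      rw [hCa]
      exact mul_mem (hconst_mem a) (pow_mem ht_mem n)
  have key : ∀ j : RatFunc F, algebraMap (RatFunc F) L j ∈ ψ.range := by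
    intro j
    induction j using RatFunc.induction_on with
    | f p q hq =>
      rw [map_div₀, div_eq_mul_inv]
      exact mul_mem (hA p) (hinv_mem _ (hA q))
  have hsurj : Function.Surjective ψ := by
    intro z
    obtain ⟨j, k, rfl⟩ := hgen z
    have : algebraMap (RatFunc F) L j + algebraMap (RatFunc F) L k * β ∈ ψ.range :=
      add_mem (key j) (mul_mem (key k) hβ_mem)
    exact this
  have hbij : Function.Bijective ψ := ⟨ψ.toRingHom.injective, hsurj⟩
  refine ⟨htrγ, AlgEquiv.ofBijective ψ hbij, ?_, ?_⟩
  · exact hψX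
  · have hmap : (Algebra.adjoin F {RatFunc.X, RatFunc.X⁻¹}).map
        (AlgEquiv.ofBijective ψ hbij).toAlgHom =
        Algebra.adjoin F {γ, γ⁻¹} := by
      rw [AlgHom.map_adjoin]
      congr 1
      rw [Set.image_insert_eq, Set.image_singleton]
      have h1 : (AlgEquiv.ofBijective ψ hbij) RatFunc.X = γ := hψX
      have h2 : (AlgEquiv.ofBijective ψ hbij) RatFunc.X⁻¹ = γ⁻¹ := by
        rw [map_inv₀, h1]
      rw [show ((AlgEquiv.ofBijective ψ hbij).toAlgHom : RatFunc F → L) =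
        (AlgEquiv.ofBijective ψ hbij) from rfl, h1, h2]
    rw [hmap]
    apply le_antisymm <;> apply Algebra.adjoin_le
    · rintro x (rfl | rfl)
      · rw [hγ]
        have h2m : (2 : L) ∈ Algebra.adjoin F {t, t * β} := by
          rw [show (2 : L) = algebraMap F L 2 from (map_ofNat _ 2).symm]
          exact Subalgebra.algebraMap_mem _ _
        exact add_mem (add_mem (one_mem _) (mul_mem h2m
          (Algebra.subset_adjoin (Set.mem_insert _ _))))
          (mul_mem h2m (Algebra.subset_adjoin (Set.mem_insert_of_mem _ rfl)))
      · rw [hγinv]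
        have h2m : (2 : L) ∈ Algebra.adjoin F {t, t * β} := by
          rw [show (2 : L) = algebraMap F L 2 from (map_ofNat _ 2).symm]
          exact Subalgebra.algebraMap_mem _ _
        exact sub_mem (add_mem (one_mem _) (mul_mem h2m
          (Algebra.subset_adjoin (Set.mem_insert _ _))))
          (mul_mem h2m (Algebra.subset_adjoin (Set.mem_insert_of_mem _ rfl)))
    · rintro x (rfl | rfl)
      · rw [hident]
        exact mul_mem (Subalgebra.algebraMap_mem _ _)
          (sub_mem (add_mem (Algebra.subset_adjoin (Set.mem_insert _ _))
            (Algebra.subset_adjoin (Set.mem_insert_of_mem _ rfl)))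
            (Subalgebra.algebraMap_mem _ _))
      · rw [hident2]
        exact mul_mem (Subalgebra.algebraMap_mem _ _)
          (sub_mem (Algebra.subset_adjoin (Set.mem_insert _ _))
            (Algebra.subset_adjoin (Set.mem_insert_of_mem _ rfl)))
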